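/- Let k be a field of characteristic p > 0. The p-permutation dimension of the cyclic group C_p over k equals p - 2 when p is odd, and 0 when p = 2. That is, every finitely generated kC_p-module admits a permutation resolution of length at most max(p-2, 0), and for odd p the module k[T]/T^{(p+1)/2} admits no shorter resolution than p - 2. -/

import Mathlib

set_option linter.unnecessarySeqFocus false
set_option linter.unreachableTactic false
set_option linter.style.multiGoal false
set_option linter.unusedVariables false
set_option linter.unnecessarySimpa false
set_option maxHeartbeats 1000000


open Polynomial

noncomputable section

/-- `Mmod k i` is the `k[T]`-module `M_i = k[T]/(T^i)`. -/
abbrev Mmod (k : Type) [Field k] (i : ℕ) : Type :=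
  Polynomial k ⧸ Ideal.span {(X : Polynomial k) ^ i}

/-- A permutation `kC_p`-module: a direct sum of copies of `kC_p = k[T]/T^p`
and the trivial module `k = k[T]/T`. -/
def IsPermMod (k : Type) [Field k] (p : ℕ) (M : Type) [AddCommGroup M]
    [Module (Polynomial k) M] : Prop :=
  ∃ r s : ℕ,
    Nonempty (M ≃ₗ[Polynomial k] ((Fin r → Mmod k p) × (Fin s → Mmod k 1)))

/-- `m` has depth `i`: `m ∈ T^i M` but `m ∉ T^{i+1} M`. -/
def HasDepth (k : Type) [Field k] {M : Type} [AddCommGroup M] [Module (Polynomial k) M]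
    (i : ℕ) (m : M) : Prop :=
  (∃ y : M, m = (X : Polynomial k) ^ i • y) ∧ ¬ ∃ y : M, m = (X : Polynomial k) ^ (i + 1) • y

/-- `α` is the nilpotency index of `m` with respect to `T`. -/
def IsIndex (k : Type) [Field k] {M : Type} [AddCommGroup M] [Module (Polynomial k) M]
    (α : ℕ) (m : M) : Prop :=
  (X : Polynomial k) ^ α • m = 0 ∧ ∀ β < α, (X : Polynomial k) ^ β • m ≠ 0

/-- `M` admits a resolution `0 → P_s → ⋯ → P_0 → M → 0` by permutation `kC_p`-modules. -/
def HasPermRes (k : Type) [Field k] (p : ℕ) :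
    (s : ℕ) → (M : Type) → [AddCommGroup M] → [Module (Polynomial k) M] → Prop
  | 0, M, _, _ => IsPermMod k p M
  | (s + 1), M, _, _ =>
      ∃ (P : Type) (_ : AddCommGroup P) (_ : Module (Polynomial k) P)
        (f : P →ₗ[Polynomial k] M), IsPermMod k p P ∧ Function.Surjective f ∧
          HasPermRes k p s (LinearMap.ker f)

/-- The `p`-permutation dimension of `M`: minimal length of a permutation resolution. -/
def ppdim (k : Type) [Field k] (p : ℕ) (M : Type) [AddCommGroup M]
    [Module (Polynomial k) M] : ℕ :=
  sInf {s | HasPermRes k p s M}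

/-- The `p`-distance function: `f 1 = f p = 0` and
`f x = min (f (p-x)) (f (p-x+1)) + 1` for `2 ≤ x ≤ p-1`. -/
def IsSizeFun (p : ℕ) (f : ℕ → ℕ) : Prop :=
  f 1 = 0 ∧ f p = 0 ∧ ∀ x, 2 ≤ x → x ≤ p - 1 → f x = min (f (p - x)) (f (p - x + 1)) + 1

namespace PPdimAux

variable {k : Type} [Field k]

/-- quotient map as a linear map -/
def qmk (k : Type) [Field k] (i : ℕ) : Polynomial k →ₗ[Polynomial k] Mmod k i :=
  Submodule.mkQ _

lemma qmk_surjective (i : ℕ) : Function.Surjective (qmk k i) :=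
  Submodule.mkQ_surjective _

lemma qmk_eq_zero {i : ℕ} {f : Polynomial k} :
    qmk k i f = 0 ↔ (X : Polynomial k) ^ i ∣ f := by
  rw [qmk, Submodule.mkQ_apply, Submodule.Quotient.mk_eq_zero]
  exact Ideal.mem_span_singleton

lemma smul_qmk (i : ℕ) (r f : Polynomial k) :
    r • (qmk k i f) = qmk k i (r * f) := by
  simp only [qmk, Submodule.mkQ_apply, ← Submodule.Quotient.mk_smul, smul_eq_mul]

lemma qmk_eq_iff {i : ℕ} {f g : Polynomial k} :
    qmk k i f = qmk k i g ↔ (X : Polynomial k) ^ i ∣ (f - g) := by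
  rw [← sub_eq_zero, ← map_sub, qmk_eq_zero]

/-- `X^j` kills `Mmod k i` for `i ≤ j`. -/
lemma kill (i : ℕ) {j : ℕ} (h : i ≤ j) (c : Mmod k i) : (X : Polynomial k) ^ j • c = 0 := by
  obtain ⟨f, rfl⟩ := qmk_surjective i c
  rw [smul_qmk, qmk_eq_zero]
  exact Dvd.dvd.mul_right (pow_dvd_pow _ h) f

lemma subsingleton_mmod_zero : Subsingleton (Mmod k 0) := by
  refine subsingleton_of_forall_eq 0 fun c => ?_
  obtain ⟨f, rfl⟩ := qmk_surjective 0 c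
  rw [qmk_eq_zero]
  simpa using one_dvd f

/-- the annihilator of `X^a` in `Mmod k n` is `X^(n-a) • Mmod k n`. -/
lemma ann {n a : ℕ} (ha : a ≤ n) {c : Mmod k n} (hc : (X : Polynomial k) ^ a • c = 0) :
    ∃ q : Mmod k n, c = (X : Polynomial k) ^ (n - a) • q := by
  obtain ⟨f, rfl⟩ := qmk_surjective n c
  rw [smul_qmk, qmk_eq_zero] at hc
  obtain ⟨d, hd⟩ := hc
  refine ⟨qmk k n d, ?_⟩
  rw [smul_qmk, qmk_eq_iff]
  have : (X : Polynomial k) ^ a * f = X ^ a * (X ^ (n - a) * d) := by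
    rw [hd, ← mul_assoc, ← pow_add]
    congr 2
    omega
  have hf : f = X ^ (n - a) * d := by
    have hx : (X : Polynomial k) ^ a ≠ 0 := pow_ne_zero _ X_ne_zero
    exact mul_left_cancel₀ hx this
  simp [hf]

lemma qmk_pow_ne_zero {n j : ℕ} (h : j < n) : qmk k n ((X : Polynomial k) ^ j) ≠ 0 := by
  rw [Ne, qmk_eq_zero]
  intro hdvd
  have := natDegree_le_of_dvd hdvd (pow_ne_zero _ X_ne_zero)
  simp only [natDegree_pow, natDegree_X, mul_one] at this
  omega

/-! ### multiplication maps between the `Mmod` -/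

/-- `Mmod k a →ₗ Mmod k b`, multiplication by `X^j`, when `b ≤ j + a`. -/
def mulQ (a b j : ℕ) (h : b ≤ j + a) : Mmod k a →ₗ[Polynomial k] Mmod k b :=
  Submodule.liftQ _ ((Submodule.mkQ _).comp
    (LinearMap.toSpanSingleton (Polynomial k) (Polynomial k) ((X : Polynomial k) ^ j)))
    (by
      intro c hc
      rw [Ideal.mem_span_singleton] at hc
      obtain ⟨d, rfl⟩ := hc
      simp only [LinearMap.mem_ker, LinearMap.coe_comp, Function.comp_apply,
        LinearMap.toSpanSingleton_apply, Submodule.mkQ_apply, smul_eq_mul,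
        Submodule.Quotient.mk_eq_zero]
      rw [Ideal.mem_span_singleton]
      exact dvd_trans (pow_dvd_pow _ (show b ≤ a + j by omega)) ⟨d, by rw [pow_add]; ring⟩)

lemma mulQ_qmk (a b j : ℕ) (h : b ≤ j + a) (f : Polynomial k) :
    mulQ a b j h (qmk k a f) = qmk k b (f * X ^ j) := by
  simp only [mulQ, qmk, Submodule.mkQ_apply]
  rw [Submodule.liftQ_apply]
  simp only [LinearMap.coe_comp, Function.comp_apply, LinearMap.toSpanSingleton_apply,
    Submodule.mkQ_apply, smul_eq_mul]

/-- the canonical projection `Mmod k p → Mmod k x` for `x ≤ p` -/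
def proj (x : ℕ) (hx : x ≤ p) : Mmod k p →ₗ[Polynomial k] Mmod k x :=
  mulQ p x 0 (by omega)

lemma proj_qmk (x : ℕ) (hx : x ≤ p) (f : Polynomial k) :
    proj x hx (qmk k p f) = qmk k x f := by
  rw [proj, mulQ_qmk]; simp

lemma proj_surjective (x : ℕ) (hx : x ≤ p) : Function.Surjective (proj (k := k) x hx) := by
  intro c
  obtain ⟨f, rfl⟩ := qmk_surjective x c
  exact ⟨qmk k p f, proj_qmk x hx f⟩

/-- the injection `Mmod k (p-x) → Mmod k p` realizing the kernel of `proj` -/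
def inj1 (x : ℕ) (hx : x ≤ p) : Mmod k (p - x) →ₗ[Polynomial k] Mmod k p :=
  mulQ (p - x) p x (by omega)

lemma inj1_injective (x : ℕ) (hx : x ≤ p) : Function.Injective (inj1 (k := k) x hx) := by
  intro c d hcd
  obtain ⟨f, rfl⟩ := qmk_surjective (p - x) c
  obtain ⟨g, rfl⟩ := qmk_surjective (p - x) d
  rw [inj1, mulQ_qmk, mulQ_qmk, qmk_eq_iff, ← sub_mul] at hcd
  rw [qmk_eq_iff]
  obtain ⟨e, he⟩ := hcd
  have hp : (f - g) * X ^ x = X ^ (p - x) * e * X ^ x := by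
    rw [he, mul_right_comm, ← pow_add]
    congr 2
    omega
  exact ⟨e, mul_right_cancel₀ (pow_ne_zero _ X_ne_zero) hp⟩

lemma range_inj1 (x : ℕ) (hx : x ≤ p) :
    LinearMap.range (inj1 (k := k) x hx) = LinearMap.ker (proj (k := k) x hx) := by
  ext c
  simp only [LinearMap.mem_range, LinearMap.mem_ker]
  constructor
  · rintro ⟨d, rfl⟩
    obtain ⟨f, rfl⟩ := qmk_surjective (p - x) d
    rw [inj1, mulQ_qmk, proj_qmk, qmk_eq_zero]
    exact Dvd.dvd.mul_left (pow_dvd_pow _ (by omega)) f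
  · intro hc
    obtain ⟨f, rfl⟩ := qmk_surjective p c
    rw [proj_qmk, qmk_eq_zero] at hc
    obtain ⟨d, rfl⟩ := hc
    refine ⟨qmk k (p - x) d, ?_⟩
    rw [inj1, mulQ_qmk, mul_comm]

/-- `Mmod k (p-x)` is the kernel of `proj x` -/
def kerEquiv1 (x : ℕ) (hx : x ≤ p) :
    Mmod k (p - x) ≃ₗ[Polynomial k] ↥(LinearMap.ker (proj (k := k) x hx)) :=
  (LinearEquiv.ofInjective _ (inj1_injective x hx)).trans
    (LinearEquiv.ofEq _ _ (range_inj1 x hx))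

/-! ### the second exact sequence `0 → M_{p-x+1} → M_p × M_1 → M_x → 0` -/

/-- `(a, b) ↦ proj a + X^(x-1)·b : M_p × M_1 → M_x` -/
def proj2 (x : ℕ) (hx : 1 ≤ x) (hx2 : x ≤ p) :
    (Mmod k p × Mmod k 1) →ₗ[Polynomial k] Mmod k x :=
  LinearMap.coprod (proj x hx2) (mulQ 1 x (x - 1) (by omega))

lemma proj2_apply (x : ℕ) (hx : 1 ≤ x) (hx2 : x ≤ p) (f g : Polynomial k) :
    proj2 x hx hx2 (qmk k p f, qmk k 1 g) = qmk k x (f + g * X ^ (x - 1)) := by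
  simp only [proj2, LinearMap.coprod_apply, proj_qmk, mulQ_qmk, map_add]

lemma proj2_surjective (x : ℕ) (hx : 1 ≤ x) (hx2 : x ≤ p) :
    Function.Surjective (proj2 (k := k) x hx hx2) := by
  intro c
  obtain ⟨f, rfl⟩ := qmk_surjective x c
  exact ⟨(qmk k p f, 0), by
    have : (0 : Mmod k 1) = qmk k 1 0 := by simp [qmk]
    rw [this, proj2_apply]; simp⟩

/-- `c ↦ (X^(x-1)·c, -c) : M_{p-x+1} → M_p × M_1` -/
def inj2 (x : ℕ) (hx : 1 ≤ x) (hx2 : x ≤ p) :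
    Mmod k (p - x + 1) →ₗ[Polynomial k] (Mmod k p × Mmod k 1) :=
  LinearMap.prod (mulQ (p - x + 1) p (x - 1) (by omega)) (-(mulQ (p - x + 1) 1 0 (by omega)))

lemma inj2_apply (x : ℕ) (hx : 1 ≤ x) (hx2 : x ≤ p) (f : Polynomial k) :
    inj2 x hx hx2 (qmk k (p - x + 1) f) = (qmk k p (f * X ^ (x - 1)), - qmk k 1 f) := by
  simp only [inj2, LinearMap.prod_apply, Pi.prod, LinearMap.neg_apply, mulQ_qmk]
  simp
  refine ⟨?_, ?_⟩ <;> rw [mulQ_qmk] <;> simp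

lemma inj2_injective (x : ℕ) (hx : 1 ≤ x) (hx2 : x ≤ p) :
    Function.Injective (inj2 (k := k) x hx hx2) := by
  rw [← LinearMap.ker_eq_bot]
  rw [Submodule.eq_bot_iff]
  intro c hc
  obtain ⟨f, rfl⟩ := qmk_surjective (p - x + 1) c
  rw [LinearMap.mem_ker, inj2_apply, Prod.mk_eq_zero, neg_eq_zero, qmk_eq_zero, qmk_eq_zero,
    pow_one] at hc
  obtain ⟨⟨d, hd⟩, ⟨e, rfl⟩⟩ := hc
  rw [qmk_eq_zero]
  have hp : X * e * X ^ (x-1) = X ^ (p - x + 1) * d * X^(x-1) := by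
    have h1 := hd
    have h2 : (X : Polynomial k) ^ (p - x + 1) * d * X^(x-1) = X ^ (p-x+1+(x-1)) * d := by
      rw [mul_right_comm, ← pow_add]
    have h3 : p - x + 1 + (x-1) = p := by omega
    rw [h1, h2, h3]
  have : e = X ^ (p - x) * d := by
    have h2 := mul_right_cancel₀ (pow_ne_zero (x-1) (X_ne_zero (R := k))) hp
    have h3 : (X : Polynomial k) * (X ^ (p - x) * d) = X ^ (p - x + 1) * d := by
      rw [← mul_assoc, ← pow_succ']
    exact mul_left_cancel₀ (X_ne_zero (R := k)) (h2.trans h3.symm)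
  exact ⟨d, by rw [this, ← mul_assoc, ← pow_succ']⟩

lemma range_inj2 (x : ℕ) (hx : 1 ≤ x) (hx2 : x ≤ p) :
    LinearMap.range (inj2 (k := k) x hx hx2) = LinearMap.ker (proj2 (k := k) x hx hx2) := by
  ext c
  simp only [LinearMap.mem_range, LinearMap.mem_ker]
  constructor
  · rintro ⟨d, rfl⟩
    obtain ⟨f, rfl⟩ := qmk_surjective (p - x + 1) d
    rw [inj2_apply]
    have : ((qmk k p (f * X ^ (x - 1)), - qmk k 1 f) : Mmod k p × Mmod k 1)
        = (qmk k p (f * X ^ (x - 1)), qmk k 1 (-f)) := by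
      simp
    rw [this, proj2_apply, qmk_eq_zero]
    have : f * X ^ (x - 1) + -f * X ^ (x - 1) = 0 := by ring
    rw [this]
    exact dvd_zero _
  · intro hc
    obtain ⟨f, hf⟩ := qmk_surjective p c.1
    obtain ⟨g, hg⟩ := qmk_surjective 1 c.2
    have hc2 : proj2 x hx hx2 (qmk k p f, qmk k 1 g) = 0 := by
      rw [hf, hg, Prod.mk.eta]; exact hc
    rw [proj2_apply, qmk_eq_zero] at hc2
    obtain ⟨d, hd⟩ := hc2
    refine ⟨qmk k (p - x + 1) (-g + X * d), ?_⟩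
    rw [inj2_apply]
    have h1 : qmk k p ((-g + X * d) * X ^ (x - 1)) = qmk k p f := by
      rw [qmk_eq_iff]
      have : (-g + X * d) * X ^ (x - 1) - f = X * d * X ^ (x-1) - (f + g * X ^ (x-1)) := by ring
      rw [this, hd]
      have hxx : (X : Polynomial k) * d * X ^ (x-1) = X ^ x * d := by
        rw [mul_assoc, mul_comm d, ← mul_assoc, ← pow_succ']
        congr 2
        omega
      rw [hxx, ← mul_sub]
      simp
    have h2 : - qmk k 1 (-g + X * d) = qmk k 1 g := by
      rw [← map_neg, qmk_eq_iff]
      have : -(-g + X * d) - g = X * (-d) := by ring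
      rw [this, pow_one]
      exact Dvd.intro _ rfl
    rw [h1, h2, hf, hg]

/-- `Mmod k (p-x+1)` is the kernel of `proj2 x` -/
def kerEquiv2 (x : ℕ) (hx : 1 ≤ x) (hx2 : x ≤ p) :
    Mmod k (p - x + 1) ≃ₗ[Polynomial k] ↥(LinearMap.ker (proj2 (k := k) x hx hx2)) :=
  (LinearEquiv.ofInjective _ (inj2_injective x hx hx2)).trans
    (LinearEquiv.ofEq _ _ (range_inj2 x hx hx2))


end PPdimAux

namespace PPdimAux

variable {k : Type} [Field k]

/-- linear equivalence between two subsingleton modules -/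
def subsingletonEquiv (R M N : Type) [CommRing R] [AddCommGroup M] [AddCommGroup N]
    [Module R M] [Module R N] [Subsingleton M] [Subsingleton N] : M ≃ₗ[R] N :=
  LinearEquiv.ofLinear 0 0 (LinearMap.ext fun x => Subsingleton.elim _ _)
    (LinearMap.ext fun x => Subsingleton.elim _ _)

/-- `M ≃ M × N` when `N` is subsingleton -/
def prodSubsingletonEquiv (R M N : Type) [CommRing R] [AddCommGroup M] [AddCommGroup N]
    [Module R M] [Module R N] [Subsingleton N] : M ≃ₗ[R] M × N :=
  LinearEquiv.ofLinear (LinearMap.prod LinearMap.id 0) (LinearMap.fst R M N)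
    (LinearMap.ext fun x => Prod.ext rfl (Subsingleton.elim _ _))
    (LinearMap.ext fun x => rfl)

/-- `↥(p.prod q) ≃ ↥p × ↥q` -/
def prodSubEquiv {R M N : Type} [CommRing R] [AddCommGroup M] [AddCommGroup N]
    [Module R M] [Module R N] (p : Submodule R M) (q : Submodule R N) :
    ↥(p.prod q) ≃ₗ[R] (↥p × ↥q) where
  toFun x := (⟨x.1.1, x.2.1⟩, ⟨x.1.2, x.2.2⟩)
  map_add' x y := rfl
  map_smul' r x := rfl
  invFun y := ⟨(y.1.1, y.2.1), ⟨y.1.2, y.2.2⟩⟩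
  left_inv x := rfl
  right_inv y := rfl

variable {p : ℕ}

lemma permCongr {M N : Type} [AddCommGroup M] [Module (Polynomial k) M]
    [AddCommGroup N] [Module (Polynomial k) N] (e : M ≃ₗ[Polynomial k] N)
    (h : IsPermMod k p M) : IsPermMod k p N := by
  obtain ⟨r, s, ⟨e'⟩⟩ := h
  exact ⟨r, s, ⟨e.symm.trans e'⟩⟩

lemma permSubsingleton {M : Type} [AddCommGroup M] [Module (Polynomial k) M]
    [Subsingleton M] : IsPermMod k p M :=
  ⟨0, 0, ⟨subsingletonEquiv _ _ _⟩⟩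

lemma permMmodP : IsPermMod k p (Mmod k p) :=
  ⟨1, 0, ⟨(prodSubsingletonEquiv _ _ _).trans
    (LinearEquiv.prodCongr (LinearEquiv.funUnique (Fin 1) (Polynomial k) (Mmod k p)).symm
      (LinearEquiv.refl _ _))⟩⟩

lemma permMmodOne : IsPermMod k p (Mmod k 1) :=
  ⟨0, 1, ⟨((prodSubsingletonEquiv (Polynomial k) (Mmod k 1) (Fin 0 → Mmod k p)).trans
    (LinearEquiv.prodCongr (LinearEquiv.funUnique (Fin 1) (Polynomial k) (Mmod k 1)).symm
      (LinearEquiv.refl _ _))).trans (LinearEquiv.prodComm _ _ _)⟩⟩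

lemma permProdMmodPOne : IsPermMod k p (Mmod k p × Mmod k 1) :=
  ⟨1, 1, ⟨LinearEquiv.prodCongr (LinearEquiv.funUnique (Fin 1) (Polynomial k) (Mmod k p)).symm
      (LinearEquiv.funUnique (Fin 1) (Polynomial k) (Mmod k 1)).symm⟩⟩

lemma permProd {M N : Type} [AddCommGroup M] [Module (Polynomial k) M]
    [AddCommGroup N] [Module (Polynomial k) N]
    (hM : IsPermMod k p M) (hN : IsPermMod k p N) : IsPermMod k p (M × N) := by
  obtain ⟨r1, s1, ⟨e1⟩⟩ := hM
  obtain ⟨r2, s2, ⟨e2⟩⟩ := hN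
  refine ⟨r1 + r2, s1 + s2, ⟨((e1.prodCongr e2).trans
    (LinearEquiv.prodProdProdComm _ _ _ _ _)).trans
    (LinearEquiv.prodCongr ?_ ?_)⟩⟩
  · exact ((LinearEquiv.sumArrowLequivProdArrow _ _ _ _).symm.trans
      (LinearEquiv.funCongrLeft _ _ finSumFinEquiv.symm))
  · exact ((LinearEquiv.sumArrowLequivProdArrow _ _ _ _).symm.trans
      (LinearEquiv.funCongrLeft _ _ finSumFinEquiv.symm))

lemma resCongr : ∀ (s : ℕ) {M N : Type} [AddCommGroup M] [Module (Polynomial k) M]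
    [AddCommGroup N] [Module (Polynomial k) N] (_ : M ≃ₗ[Polynomial k] N)
    (_ : HasPermRes k p s M), HasPermRes k p s N
  | 0, M, N, _, _, _, _, e, h => permCongr e h
  | (s+1), M, N, _, _, _, _, e, h => by
    obtain ⟨P, i1, i2, f, hP, hsurj, hres⟩ := h
    refine ⟨P, i1, i2, e.toLinearMap ∘ₗ f, hP, e.surjective.comp hsurj, ?_⟩
    have hker : LinearMap.ker (e.toLinearMap ∘ₗ f) = LinearMap.ker f := by
      rw [LinearMap.ker_comp, LinearEquiv.ker, Submodule.comap_bot]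
    exact resCongr s (LinearEquiv.ofEq _ _ hker.symm) hres

lemma resStepOfPerm : ∀ (s : ℕ) {M : Type} [AddCommGroup M] [Module (Polynomial k) M]
    (_ : IsPermMod k p M), HasPermRes k p s M
  | 0, M, _, _, h => h
  | (s+1), M, _, _, h => by
    refine ⟨M, inferInstance, inferInstance, LinearMap.id, h, fun x => ⟨x, rfl⟩, ?_⟩
    haveI : Subsingleton ↥(LinearMap.ker (LinearMap.id : M →ₗ[Polynomial k] M)) := by
      rw [LinearMap.ker_id]; infer_instance
    exact resStepOfPerm s permSubsingleton

lemma resSucc : ∀ (s : ℕ) {M : Type} [AddCommGroup M] [Module (Polynomial k) M]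
    (_ : HasPermRes k p s M), HasPermRes k p (s+1) M
  | 0, M, _, _, h => resStepOfPerm 1 h
  | (s+1), M, _, _, h => by
    obtain ⟨P, i1, i2, f, hP, hsurj, hres⟩ := h
    exact ⟨P, i1, i2, f, hP, hsurj, resSucc s hres⟩

lemma resMono {s t : ℕ} (hst : s ≤ t) {M : Type} [AddCommGroup M] [Module (Polynomial k) M]
    (h : HasPermRes k p s M) : HasPermRes k p t M := by
  induction t with
  | zero => exact (Nat.le_zero.mp hst ▸ h)
  | succ t ih =>
    rcases Nat.lt_or_ge s (t+1) with hlt | hge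
    · exact resSucc t (ih (by omega))
    · have : s = t + 1 := by omega
      exact this ▸ h

lemma resProd : ∀ (s : ℕ) {M N : Type} [AddCommGroup M] [Module (Polynomial k) M]
    [AddCommGroup N] [Module (Polynomial k) N]
    (_ : HasPermRes k p s M) (_ : HasPermRes k p s N), HasPermRes k p s (M × N)
  | 0, M, N, _, _, _, _, hM, hN => permProd hM hN
  | (s+1), M, N, _, _, _, _, hM, hN => by
    obtain ⟨P, i1, i2, f, hP, hsurj, hres⟩ := hM
    obtain ⟨Q, j1, j2, g, hQ, gsurj, gres⟩ := hN
    refine ⟨P × Q, inferInstance, inferInstance, f.prodMap g, permProd hP hQ,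
      Function.Surjective.prodMap hsurj gsurj, ?_⟩
    have hker := LinearMap.ker_prodMap f g
    refine resCongr s ((prodSubEquiv _ _).symm.trans (LinearEquiv.ofEq _ _ hker.symm)) ?_
    exact resProd s hres gres


/-! ### the size function and resolutions of the `Mmod k x` -/

/-- the explicit size function: minimal resolution length of `Mmod k x`. -/
def L (p x : ℕ) : ℕ := if 2 * x ≤ p then 2 * x - 2 else 2 * (p - x) - 1

lemma L_le (hp : 2 ≤ p) (x : ℕ) (hx : x ≤ p) : L p x ≤ p - 2 := by
  unfold L
  split <;> omega

/-- resolutions of length `0` for the extreme cases -/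
lemma resBase (hp : 2 ≤ p) (x : ℕ) (hx : x = 0 ∨ x = 1 ∨ x = p) :
    HasPermRes k p (L p x) (Mmod k x) := by
  have hL : L p x = 0 := by unfold L; split <;> omega
  rw [hL]
  rcases hx with rfl | rfl | rfl
  · haveI := subsingleton_mmod_zero (k := k)
    exact permSubsingleton
  · exact permMmodOne
  · exact permMmodP

/-- `Mmod k x` has a permutation resolution of length `L p x`. -/
lemma resMmod (hp : p.Prime) : ∀ (x : ℕ), x ≤ p → HasPermRes k p (L p x) (Mmod k x) := by
  have key : ∀ (n : ℕ) (x : ℕ), x ≤ p → L p x ≤ n → HasPermRes k p (L p x) (Mmod k x) := by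
    intro n
    induction n with
    | zero =>
      intro x hx hL
      refine resBase hp.two_le x ?_
      by_contra hcon
      push_neg at hcon
      obtain ⟨h0, h1, hpp⟩ := hcon
      have : 1 ≤ L p x := by
        have hx2 : 2 ≤ x := by omega
        have hxp1 : x ≤ p - 1 := by omega
        unfold L; split <;> omega
      omega
    | succ n ih =>
      intro x hx hL
      by_cases hbase : x = 0 ∨ x = 1 ∨ x = p
      · exact resBase hp.two_le x hbase
      push_neg at hbase
      obtain ⟨h0, h1, hpp⟩ := hbase
      have hx2 : 2 ≤ x := by omega
      have hxp1 : x ≤ p - 1 := by omega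
      have hp3 : 3 ≤ p := by
        have := hp.two_le
        omega
      have hne : 2 * x ≠ p := by
        intro h2x
        rcases (hp.eq_one_or_self_of_dvd 2 ⟨x, h2x.symm⟩) with h | h <;> omega
      have hx1 : 1 ≤ x := by omega
      have hxp : x ≤ p := hx
      rcases Nat.lt_or_ge (2 * x) p with hlt | hge
      · have hLy : L p (p - x + 1) + 1 = L p x := by
          unfold L; split <;> split <;> omega
        have hyp : p - x + 1 ≤ p := by omega
        have hres : HasPermRes k p (L p (p - x + 1)) (Mmod k (p - x + 1)) :=
          ih (p - x + 1) hyp (by omega)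
        have hker : HasPermRes k p (L p (p - x + 1))
            ↥(LinearMap.ker (proj2 (k := k) (p := p) x hx1 hxp)) :=
          resCongr _ (kerEquiv2 x hx1 hxp) hres
        have hstep : HasPermRes k p (L p (p - x + 1) + 1) (Mmod k x) :=
          ⟨Mmod k p × Mmod k 1, inferInstance, inferInstance, proj2 x hx1 hxp,
            permProdMmodPOne, proj2_surjective x hx1 hxp, hker⟩
        rwa [hLy] at hstep
      · have hgt : 2 * x > p := by omega
        have hLy : L p (p - x) + 1 = L p x := by
          unfold L; split <;> split <;> omega
        have hyp : p - x ≤ p := by omega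
        have hres : HasPermRes k p (L p (p - x)) (Mmod k (p - x)) :=
          ih (p - x) hyp (by omega)
        have hker : HasPermRes k p (L p (p - x))
            ↥(LinearMap.ker (proj (k := k) (p := p) x hxp)) :=
          resCongr _ (kerEquiv1 x hxp) hres
        have hstep : HasPermRes k p (L p (p - x) + 1) (Mmod k x) :=
          ⟨Mmod k p, inferInstance, inferInstance, proj x hxp,
            permMmodP, proj_surjective x hxp, hker⟩
        rwa [hLy] at hstep
  intro x hx
  exact key (L p x) x hx le_rfl


/-! ### every finitely generated killed module decomposes -/

open scoped Classical in
lemma decomp (p : ℕ) (hp : 0 < p) (M : Type) [AddCommGroup M] [Module (Polynomial k) M]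
    [Module.Finite (Polynomial k) M] (hM : ∀ m : M, (X : Polynomial k) ^ p • m = 0) :
    ∃ (n : ℕ) (d : Fin n → ℕ), (∀ i, d i ≤ p) ∧
      Nonempty (M ≃ₗ[Polynomial k] ((i : Fin n) → Mmod k (d i))) := by
  have htor : Module.IsTorsion (Polynomial k) M := by
    intro m
    exact ⟨⟨X ^ p, mem_nonZeroDivisors_of_ne_zero (pow_ne_zero _ X_ne_zero)⟩, hM m⟩
  obtain ⟨ι, hfin, q, hirr, e, ⟨E0⟩⟩ := Module.equiv_directSum_of_isTorsion htor
  haveI := hfin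
  -- pass to the product
  let E1 : M ≃ₗ[Polynomial k] ((i : ι) → Polynomial k ⧸ Submodule.span (Polynomial k) {q i ^ e i}) :=
    E0.trans (DirectSum.linearEquivFunOnFintype _ _ _)
  -- each factor is killed by X^p
  have hkill : ∀ (i : ι) (v : Polynomial k ⧸ Submodule.span (Polynomial k) {q i ^ e i}),
      (X : Polynomial k) ^ p • v = 0 := by
    intro i v
    have h1 : (X : Polynomial k) ^ p • (E1.symm (Pi.single i v)) = 0 := hM _
    have h2 : E1 ((X : Polynomial k) ^ p • (E1.symm (Pi.single i v))) = 0 := by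
      rw [h1, map_zero]
    rw [map_smul, E1.apply_symm_apply] at h2
    have h3 := congrFun h2 i
    simpa using h3
  -- hence q i ^ e i divides X^p
  have hdvd : ∀ i : ι, q i ^ e i ∣ (X : Polynomial k) ^ p := by
    intro i
    have := hkill i (Submodule.Quotient.mk 1)
    rw [← Submodule.Quotient.mk_smul, smul_eq_mul, mul_one,
      Submodule.Quotient.mk_eq_zero] at this
    exact Ideal.mem_span_singleton.mp this
  have hle : ∀ i : ι, e i ≤ p := by
    intro i
    rcases Nat.eq_zero_or_pos (e i) with h | h
    · omega
    have hq : q i ∣ (X : Polynomial k) ^ p := dvd_trans (dvd_pow_self _ (by omega)) (hdvd i)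
    have hqX : Associated (q i) (X : Polynomial k) :=
      (hirr i).associated_of_dvd (prime_X.irreducible)
        ((((hirr i).prime)).dvd_of_dvd_pow hq)
    have : (X : Polynomial k) ^ (e i) ∣ X ^ p :=
      (Associated.dvd_iff_dvd_left (hqX.pow_pow)).mp (hdvd i)
    have := natDegree_le_of_dvd this (pow_ne_zero _ X_ne_zero)
    simpa using this
  -- each factor is isomorphic to Mmod k (e i)
  have hfac : ∀ i : ι, Nonempty
      ((Polynomial k ⧸ Submodule.span (Polynomial k) {q i ^ e i}) ≃ₗ[Polynomial k]
        Mmod k (e i)) := by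
    intro i
    rcases Nat.eq_zero_or_pos (e i) with h | h
    · haveI : Subsingleton (Polynomial k ⧸ Submodule.span (Polynomial k) {q i ^ e i}) := by
        rw [h, pow_zero]
        have h1 : Submodule.span (Polynomial k) {(1 : Polynomial k)} = ⊤ := by
          rw [← Ideal.span]
          exact Ideal.span_singleton_one
        rw [h1]
        infer_instance
      haveI : Subsingleton (Mmod k (e i)) := by
        rw [h]
        exact subsingleton_mmod_zero
      exact ⟨subsingletonEquiv _ _ _⟩
    · have hq : q i ∣ (X : Polynomial k) ^ p := dvd_trans (dvd_pow_self _ (by omega)) (hdvd i)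
      have hqX : Associated (q i) (X : Polynomial k) :=
        (hirr i).associated_of_dvd (prime_X.irreducible)
          ((((hirr i).prime)).dvd_of_dvd_pow hq)
      have hspan : Submodule.span (Polynomial k) {q i ^ e i}
          = Ideal.span {(X : Polynomial k) ^ e i} := by
        rw [← Ideal.span]
        exact Ideal.span_singleton_eq_span_singleton.mpr (hqX.pow_pow)
      exact ⟨Submodule.quotEquivOfEq _ _ hspan⟩
  let E2 : M ≃ₗ[Polynomial k] ((i : ι) → Mmod k (e i)) :=
    E1.trans (LinearEquiv.piCongrRight fun i => (hfac i).some)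
  -- reindex by Fin
  let ε := Fintype.equivFin ι
  exact ⟨Fintype.card ι, fun j => e (ε.symm j), fun j => hle _,
    ⟨E2.trans (LinearEquiv.piCongrLeft' (Polynomial k) (fun i => Mmod k (e i)) ε)⟩⟩

/-- resolutions for finite products -/
lemma resPi (t : ℕ) : ∀ (n : ℕ) (d : Fin n → ℕ)
    (_ : ∀ i, HasPermRes k p t (Mmod k (d i))),
    HasPermRes k p t ((i : Fin n) → Mmod k (d i)) := by
  intro n
  induction n with
  | zero =>
    intro d hd
    haveI : Subsingleton ((i : Fin 0) → Mmod k (d i)) := by infer_instance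
    exact resMono (Nat.zero_le t) (permSubsingleton (M := (i : Fin 0) → Mmod k (d i)))
  | succ n ih =>
    intro d hd
    have h1 : HasPermRes k p t ((i : Fin n) → Mmod k (d i.succ)) :=
      ih (fun i => d i.succ) (fun i => hd i.succ)
    have h2 : HasPermRes k p t (Mmod k (d 0) × ((i : Fin n) → Mmod k (d i.succ))) :=
      resProd t (hd 0) h1
    refine resCongr t (LinearEquiv.symm ?_) h2
    -- (Fin (n+1) → _) ≃ (_ 0) × (Fin n → _)
    exact (LinearEquiv.piCongrLeft' (Polynomial k) _ (finSuccEquiv n)).trans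
      (LinearEquiv.piOptionEquivProd (Polynomial k))

/-! ### the lower bound -/

/-- `M` has a socle element of depth exactly `γ - 1`. -/
def Soc (γ : ℕ) (M : Type) [AddCommGroup M] [Module (Polynomial k) M] : Prop :=
  ∃ n : M, (X : Polynomial k) • n = 0 ∧ (∃ y, n = (X : Polynomial k) ^ (γ - 1) • y) ∧
    ¬ ∃ y, n = (X : Polynomial k) ^ γ • y

lemma socCongr {γ : ℕ} {M N : Type} [AddCommGroup M] [Module (Polynomial k) M]
    [AddCommGroup N] [Module (Polynomial k) N] (e : M ≃ₗ[Polynomial k] N)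
    (h : Soc (k := k) γ M) : Soc (k := k) γ N := by
  obtain ⟨n, hXn, ⟨y, hy⟩, hno⟩ := h
  refine ⟨e n, ?_, ⟨e y, ?_⟩, ?_⟩
  · rw [← map_smul, hXn, map_zero]
  · rw [← map_smul, hy]
  · rintro ⟨y', hy'⟩
    apply hno
    refine ⟨e.symm y', ?_⟩
    apply e.injective
    rw [map_smul, e.apply_symm_apply, hy']

lemma killP0 (hp1 : 1 ≤ p) (r s : ℕ) (v : (Fin r → Mmod k p) × (Fin s → Mmod k 1)) :
    (X : Polynomial k) ^ p • v = 0 := by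
  refine Prod.ext ?_ ?_
  · exact funext fun i => kill p le_rfl _
  · exact funext fun j => kill 1 hp1 _

lemma permNoMidSoc (r s γ : ℕ) (h2 : 2 ≤ γ) (hγ : γ ≤ p - 1) (hp2 : 2 ≤ p) :
    ¬ Soc (k := k) γ ((Fin r → Mmod k p) × (Fin s → Mmod k 1)) := by
  rintro ⟨n, hXn, ⟨y, rfl⟩, hno⟩
  apply hno
  have hcomp : ∀ i : Fin r, (X : Polynomial k) ^ γ • (y.1 i) = 0 := by
    intro i
    have h1 : (X : Polynomial k) • ((X : Polynomial k) ^ (γ - 1) • (y.1 i)) = 0 :=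
      congrFun (congrArg Prod.fst hXn) i
    rwa [smul_smul, ← pow_succ', (show γ - 1 + 1 = γ by omega)] at h1
  have hann : ∀ i : Fin r, ∃ q : Mmod k p, y.1 i = (X : Polynomial k) ^ (p - γ) • q :=
    fun i => ann (by omega) (hcomp i)
  choose q hq using hann
  refine ⟨((fun i => (X : Polynomial k) ^ (p - 1 - γ) • q i), 0), ?_⟩
  refine Prod.ext ?_ ?_
  · funext i
    show (X : Polynomial k) ^ (γ - 1) • (y.1 i)
        = (X : Polynomial k) ^ γ • ((X : Polynomial k) ^ (p - 1 - γ) • q i)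
    rw [hq i, smul_smul, smul_smul, ← pow_add, ← pow_add,
      (show γ - 1 + (p - γ) = γ + (p - 1 - γ) by omega)]
  · funext j
    show (X : Polynomial k) ^ (γ - 1) • (y.2 j) = (X : Polynomial k) ^ γ • (0 : Mmod k 1)
    rw [smul_zero]
    have h2' : (X : Polynomial k) ^ (γ - 1) • (y.2 j) = 0 := kill 1 (by omega) _
    exact h2'

section shift
variable {M : Type} [AddCommGroup M] [Module (Polynomial k) M]

lemma shift {a b c : ℕ} (h : a + b = c) (m : M) :
    (X : Polynomial k) ^ a • ((X : Polynomial k) ^ b • m) = (X : Polynomial k) ^ c • m := by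
  rw [smul_smul, ← pow_add, h]

lemma shiftX {b c : ℕ} (h : b + 1 = c) (m : M) :
    (X : Polynomial k) • ((X : Polynomial k) ^ b • m) = (X : Polynomial k) ^ c • m := by
  rw [smul_smul, ← pow_succ', h]

end shift

lemma kerSoc {r s : ℕ} {M : Type} [AddCommGroup M] [Module (Polynomial k) M]
    (f : ((Fin r → Mmod k p) × (Fin s → Mmod k 1)) →ₗ[Polynomial k] M)
    (hf : Function.Surjective f) {α : ℕ} (h2 : 2 ≤ α) (hα : α ≤ p - 1) (hp2 : 2 ≤ p)
    (hSoc : Soc (k := k) α M) :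
    Soc (k := k) (p - α) ↥(LinearMap.ker f) ∨ Soc (k := k) (p - α + 1) ↥(LinearMap.ker f) := by
  obtain ⟨m₁, hXm, ⟨m, hm⟩, hno⟩ := hSoc
  obtain ⟨u, hu⟩ := hf m
  have hfw : f ((X : Polynomial k) ^ (α - 1) • u) = m₁ := by rw [map_smul, hu, ← hm]
  have hfXw : f ((X : Polynomial k) ^ α • u) = 0 := by
    rw [(show α = α - 1 + 1 by omega), ← shiftX rfl u, map_smul, hfw, hXm]
  have hfσ : f ((X : Polynomial k) ^ (p - 1) • u) = 0 := by
    rw [← shift (show (p - 1 - α) + α = p - 1 by omega) u, map_smul, hfXw, smul_zero]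
  set K := LinearMap.ker f with hK
  have memXw : (X : Polynomial k) ^ α • u ∈ K := by rw [hK, LinearMap.mem_ker]; exact hfXw
  have memσ : (X : Polynomial k) ^ (p - 1) • u ∈ K := by rw [hK, LinearMap.mem_ker]; exact hfσ
  have hσwK : (⟨(X : Polynomial k) ^ (p - 1) • u, memσ⟩ : K)
      = (X : Polynomial k) ^ (p - α - 1) • (⟨(X : Polynomial k) ^ α • u, memXw⟩ : K) := by
    apply Subtype.ext
    show (X : Polynomial k) ^ (p - 1) • u
        = (X : Polynomial k) ^ (p - α - 1) • ((X : Polynomial k) ^ α • u)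
    rw [shift (show p - α - 1 + α = p - 1 by omega)]
  have hXσK : (X : Polynomial k) • (⟨(X : Polynomial k) ^ (p - 1) • u, memσ⟩ : K) = 0 := by
    apply Subtype.ext
    show (X : Polynomial k) • ((X : Polynomial k) ^ (p - 1) • u) = 0
    rw [shiftX (show p - 1 + 1 = p by omega)]
    exact killP0 (by omega) r s u
  by_cases hc1 : ∃ z : K, (⟨(X : Polynomial k) ^ (p - 1) • u, memσ⟩ : K)
      = (X : Polynomial k) ^ (p - α) • z
  · by_cases hc2 : ∃ z : K, (⟨(X : Polynomial k) ^ (p - 1) • u, memσ⟩ : K)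
        = (X : Polynomial k) ^ (p - α + 1) • z
    · exfalso
      obtain ⟨z, hz⟩ := hc2
      have hzcoe : (X : Polynomial k) ^ (p - 1) • u
          = (X : Polynomial k) ^ (p - α + 1) • (z : (Fin r → Mmod k p) × (Fin s → Mmod k 1)) := by
        have h3 := congrArg (Subtype.val) hz
        simpa using h3
      have h1 : (X : Polynomial k) ^ (p - α + 1)
          • ((X : Polynomial k) ^ (α - 2) • u - (z : _)) = 0 := by
        rw [smul_sub, shift (show p - α + 1 + (α - 2) = p - 1 by omega), hzcoe, sub_self]
      have hcomp : ∀ i : Fin r, ∃ q : Mmod k p,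
          (X : Polynomial k) • (((X : Polynomial k) ^ (α - 2) • u - (z : _)).1 i)
            = (X : Polynomial k) ^ α • q := by
        intro i
        have hvi : (X : Polynomial k) ^ (p - α + 1)
            • (((X : Polynomial k) ^ (α - 2) • u - (z : _)).1 i) = 0 :=
          congrFun (congrArg Prod.fst h1) i
        obtain ⟨q, hq⟩ := ann (show p - α + 1 ≤ p by omega) hvi
        refine ⟨q, ?_⟩
        rw [hq, shiftX (show p - (p - α + 1) + 1 = α by omega)]
      choose q hq using hcomp
      apply hno
      refine ⟨f ((fun i => q i), 0), ?_⟩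
      have hfz : f (z : _) = 0 := LinearMap.mem_ker.mp z.2
      have hXv : (X : Polynomial k) • ((X : Polynomial k) ^ (α - 2) • u - (z : _))
          = (X : Polynomial k) ^ α • (((fun i => q i), 0) :
            (Fin r → Mmod k p) × (Fin s → Mmod k 1)) := by
        refine Prod.ext ?_ ?_
        · exact funext fun i => hq i
        · funext j
          show (X : Polynomial k) • (((X : Polynomial k) ^ (α - 2) • u - (z : _)).2 j)
              = (X : Polynomial k) ^ α • (0 : Mmod k 1)
          rw [smul_zero]
          have hk := kill (k := k) 1 le_rfl
            (((X : Polynomial k) ^ (α - 2) • u - (z : _)).2 j)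
          simpa using hk
      have hXv2 : (X : Polynomial k) • ((X : Polynomial k) ^ (α - 2) • u - (z : _))
          = (X : Polynomial k) ^ (α - 1) • u - (X : Polynomial k) • (z : _) := by
        rw [smul_sub, shiftX (show α - 2 + 1 = α - 1 by omega)]
      calc m₁ = f ((X : Polynomial k) ^ (α - 1) • u) := hfw.symm
      _ = f ((X : Polynomial k) ^ (α - 1) • u - (X : Polynomial k) • (z : _)) := by
          simp only [map_sub, map_smul, hfz, smul_zero, sub_zero]
      _ = f ((X : Polynomial k) • ((X : Polynomial k) ^ (α - 2) • u - (z : _))) := by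
          rw [hXv2]
      _ = (X : Polynomial k) ^ α • f ((fun i => q i), 0) := by rw [hXv, map_smul]
    · right
      refine ⟨⟨(X : Polynomial k) ^ (p - 1) • u, memσ⟩, hXσK, ?_, hc2⟩
      have hred : p - α + 1 - 1 = p - α := by omega
      rw [hred]
      exact hc1
  · left
    exact ⟨⟨(X : Polynomial k) ^ (p - 1) • u, memσ⟩, hXσK, ⟨_, hσwK⟩, hc1⟩

lemma lowerBound (hp : p.Prime) : ∀ (s : ℕ) (M : Type) [AddCommGroup M]
    [Module (Polynomial k) M] (_ : HasPermRes k p s M) (α : ℕ) (_ : 2 ≤ α) (_ : α ≤ p - 1)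
    (_ : Soc (k := k) α M), L p α ≤ s
  | 0, M, _, _, h, α, h2, hα, hSoc => by
    exfalso
    obtain ⟨r, t, ⟨e⟩⟩ := h
    exact permNoMidSoc r t α h2 hα hp.two_le (socCongr e hSoc)
  | (s+1), M, _, _, h, α, h2, hα, hSoc => by
    obtain ⟨P, i1, i2, f, hP, hsurj, hres⟩ := h
    obtain ⟨r, t, ⟨e⟩⟩ := hP
    have hp2 := hp.two_le
    have hp3 : 3 ≤ p := by omega
    obtain ⟨c, hc⟩ := hp.odd_of_ne_two (by omega)
    have hsurj' : Function.Surjective (f ∘ₗ (e.symm.toLinearMap)) :=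
      hsurj.comp e.symm.surjective
    have hkereq : Submodule.map (e.toLinearMap) (LinearMap.ker f)
        = LinearMap.ker (f ∘ₗ (e.symm.toLinearMap)) := by
      ext x
      simp only [Submodule.mem_map, LinearMap.mem_ker, LinearMap.coe_comp,
        Function.comp_apply, LinearEquiv.coe_coe]
      constructor
      · rintro ⟨y, hy, rfl⟩
        rwa [e.symm_apply_apply]
      · intro hx
        exact ⟨e.symm x, hx, e.apply_symm_apply x⟩
    have equivK : ↥(LinearMap.ker f) ≃ₗ[Polynomial k]
        ↥(LinearMap.ker (f ∘ₗ (e.symm.toLinearMap))) :=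
      (e.submoduleMap (LinearMap.ker f)).trans (LinearEquiv.ofEq _ _ hkereq)
    rcases kerSoc (f ∘ₗ (e.symm.toLinearMap)) hsurj' h2 hα hp2 hSoc with hS | hS
    · by_cases hpα : 2 ≤ p - α
      · have hrec : L p (p - α) ≤ s :=
          lowerBound hp s _ hres (p - α) hpα (by omega) (socCongr equivK.symm hS)
        have harith : L p α ≤ L p (p - α) + 1 := by
          unfold L; split <;> split <;> omega
        omega
      · have : L p α = 1 := by unfold L; split <;> omega
        omega
    · have h2' : 2 ≤ p - α + 1 := by omega
      have hα' : p - α + 1 ≤ p - 1 := by omega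
      have hrec : L p (p - α + 1) ≤ s :=
        lowerBound hp s _ hres (p - α + 1) h2' hα' (socCongr equivK.symm hS)
      have harith : L p α ≤ L p (p - α + 1) + 1 := by
        unfold L; split <;> split <;> omega
      omega

lemma socMmod (x : ℕ) (hx : 1 ≤ x) : Soc (k := k) x (Mmod k x) := by
  refine ⟨qmk k x ((X : Polynomial k) ^ (x - 1)), ?_, ⟨qmk k x 1, ?_⟩, ?_⟩
  · rw [smul_qmk, qmk_eq_zero]
    have hxx : (X : Polynomial k) * X ^ (x - 1) = X ^ x := by
      rw [← pow_succ', (show x - 1 + 1 = x by omega)]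
    rw [hxx]
  · rw [smul_qmk, mul_one]
  · rintro ⟨y, hy⟩
    have h0 : (X : Polynomial k) ^ x • y = 0 := kill x le_rfl y
    rw [h0] at hy
    exact qmk_pow_ne_zero (by omega) hy

lemma part2' (hp : p.Prime) (hp3 : 3 ≤ p) (x : ℕ) (h2x : 2 * x = p + 1) :
    ppdim k p (Mmod k x) = p - 2 := by
  have hhp : x ≤ p := by omega
  have hL : L p x = p - 2 := by unfold L; split <;> omega
  have hmem : HasPermRes k p (p - 2) (Mmod k x) := by
    have hr := resMmod (k := k) hp x hhp
    rwa [hL] at hr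
  rw [ppdim]
  apply le_antisymm
  · exact Nat.sInf_le hmem
  · refine le_csInf ⟨p - 2, hmem⟩ ?_
    intro s hs
    have hrec := lowerBound hp s (Mmod k x) hs x (by omega) (by omega)
      (socMmod x (by omega))
    rw [hL] at hrec
    exact hrec

lemma part2 (hp : p.Prime) (hodd : Odd p) : ppdim k p (Mmod k ((p + 1) / 2)) = p - 2 := by
  obtain ⟨c, hc⟩ := hodd
  have hp2 := hp.two_le
  have hp3 : 3 ≤ p := by omega
  exact part2' hp hp3 _ (by omega)

lemma part1 (hp : p.Prime) (M : Type) [AddCommGroup M] [Module (Polynomial k) M]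
    [Module.Finite (Polynomial k) M] (hM : ∀ m : M, (X : Polynomial k) ^ p • m = 0) :
    HasPermRes k p (p - 2) M := by
  obtain ⟨n, d, hd, ⟨E⟩⟩ := decomp p hp.pos M hM
  refine resCongr _ E.symm (resPi (p - 2) n d fun i => ?_)
  exact resMono (L_le hp.two_le _ (hd i)) (resMmod hp _ (hd i))

end PPdimAux


/-- The `p`-permutation dimension of `C_p` over a field of characteristic `p` is
`p - 2` for odd `p` and `0` for `p = 2`: every finitely generated `kC_p`-module has a
permutation resolution of length at most `max (p-2) 0`, and for odd `p` the module
`k[T]/T^{(p+1)/2}` admits no resolution shorter than `p - 2`. -/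
theorem stmt15 (k : Type) [Field k] (p : ℕ) (hp : p.Prime) [CharP k p] :
    (∀ (M : Type) [AddCommGroup M] [Module (Polynomial k) M],
      Module.Finite (Polynomial k) M → (∀ m : M, (X : Polynomial k) ^ p • m = 0) →
        HasPermRes k p (max (p - 2) 0) M ∧ ppdim k p M ≤ max (p - 2) 0) ∧
      (Odd p → ppdim k p (Mmod k ((p + 1) / 2)) = p - 2) := by
  constructor
  · intro M _ _ hfin hM
    haveI := hfin
    have hres : HasPermRes k p (p - 2) M := PPdimAux.part1 hp M hM
    have hmax : max (p - 2) 0 = p - 2 := Nat.max_eq_left (Nat.zero_le _)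
    constructor
    · rw [hmax]
      exact hres
    · rw [hmax, ppdim]
      exact Nat.sInf_le hres
  · intro hodd
    exact PPdimAux.part2 hp hodd
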